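/- Let (Ω, F, P) be a probability space with a filtration (F_i)_{i∈ℕ}, and fix M ∈ ℕ, constants 0 < ν ≤ δ, β ≥ 0, σ ≥ 0, e ≥ 0, η ≥ 0, a vector w° ∈ ℝ^M, a vector b ∈ ℝ^M with ‖b‖ ≤ η e, and a step-size μ with 0 < μ < min{ν/δ², 2/ν}. Suppose w̃_{i-1} is F_{i-1}-measurable and square integrable, H_{i-1} is an F_{i-1}-measurable random symmetric M×M matrix satisfying ν I ≤ H_{i-1} ≤ δ I (in the Loewner order) almost surely, s_i is a square-integrable random vector with E[s_i | F_{i-1}] = 0 and E[‖s_i‖² | F_{i-1}] ≤ β² ‖w̃_{i-1} + w°‖² + σ² almost surely, and q_i is a random vector with ‖q_i‖ ≤ e almost surely. Define w̃_i = (I − μ H_{i-1}) w̃_{i-1} + μ s_i − μ η q_i − μ b. Then E‖w̃_i‖² ≤ (1 − μν/2 + 2μ²β²/(1 − μν/2)) E‖w̃_{i-1}‖² + 2μ²β²‖w°‖²/(1 − μν/2) + μ²σ²/(1 − μν/2) + 8 μ η² e² / ν. -/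

import Mathlib

open MeasureTheory

lemma sq_add_le_div (a b t : ℝ) (ht : 0 < t) (ht1 : t < 1) :
    (a + b) ^ 2 ≤ (1 - t)⁻¹ * a ^ 2 + t⁻¹ * b ^ 2 := by
  have h1t : 0 < 1 - t := by linarith
  have key : t * (1 - t) * (a + b) ^ 2 ≤ t * a ^ 2 + (1 - t) * b ^ 2 := by
    nlinarith [sq_nonneg (t * a - (1 - t) * b)]
  rw [← sub_nonneg]
  have expand : (1 - t)⁻¹ * a ^ 2 + t⁻¹ * b ^ 2 - (a + b) ^ 2
      = (t * a ^ 2 + (1 - t) * b ^ 2 - t * (1 - t) * (a + b) ^ 2) / (t * (1 - t)) := by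
    field_simp
  rw [expand]
  exact div_nonneg (by linarith) (by positivity)

lemma symm_op_sq_norm {E : Type*} [NormedAddCommGroup E] [InnerProductSpace ℝ E]
    {δ : ℝ} (hδ : 0 < δ) (T : E →ₗ[ℝ] E)
    (hsym : ∀ a c : E, (inner ℝ (T a) c : ℝ) = inner ℝ a (T c))
    (hlo : ∀ z : E, 0 ≤ (inner ℝ z (T z) : ℝ))
    (hhi : ∀ z : E, (inner ℝ z (T z) : ℝ) ≤ δ * ‖z‖ ^ 2)
    (x : E) : ‖T x‖ ^ 2 ≤ δ ^ 2 * ‖x‖ ^ 2 := by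
  have h1 := hhi (δ • x + T x)
  have h2 := hlo (δ • x - T x)
  have hX := hhi x
  have h0 := hlo x
  have e1 : (inner ℝ (δ • x + T x) (T (δ • x + T x)) : ℝ)
      = δ ^ 2 * inner ℝ x (T x) + 2 * δ * ‖T x‖ ^ 2 + inner ℝ (T x) (T (T x)) := by
    simp only [map_add, LinearMap.map_smul, inner_add_left, inner_add_right, real_inner_smul_left,
      real_inner_smul_right]
    rw [← hsym x (T x), real_inner_self_eq_norm_sq]
    ring
  have e2 : (inner ℝ (δ • x - T x) (T (δ • x - T x)) : ℝ)
      = δ ^ 2 * inner ℝ x (T x) - 2 * δ * ‖T x‖ ^ 2 + inner ℝ (T x) (T (T x)) := by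
    simp only [map_sub, LinearMap.map_smul, inner_sub_left, inner_sub_right, real_inner_smul_left,
      real_inner_smul_right]
    rw [← hsym x (T x), real_inner_self_eq_norm_sq]
    ring
  have e3 : ‖δ • x + T x‖ ^ 2 = δ ^ 2 * ‖x‖ ^ 2 + 2 * δ * (inner ℝ x (T x) : ℝ) + ‖T x‖ ^ 2 := by
    rw [norm_add_sq_real, real_inner_smul_left, norm_smul, Real.norm_eq_abs, abs_of_pos hδ]
    ring
  rw [e1, e3] at h1
  rw [e2] at h2
  nlinarith [mul_le_mul_of_nonneg_left hX (by positivity : (0:ℝ) ≤ 2 * δ ^ 2), hδ]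

set_option maxHeartbeats 1000000 in
theorem stmt0
    {Ω : Type*} {m0 : MeasurableSpace Ω} {P : Measure Ω} [IsProbabilityMeasure P]
    (ℱ : Filtration ℕ m0) (M : ℕ)
    (ν δ β σ e η : ℝ) (hν : 0 < ν) (hνδ : ν ≤ δ) (hβ : 0 ≤ β) (hσ : 0 ≤ σ)
    (he : 0 ≤ e) (hη : 0 ≤ η)
    (wo b : EuclideanSpace ℝ (Fin M)) (hb : ‖b‖ ≤ η * e)
    (μ : ℝ) (hμ0 : 0 < μ) (hμ : μ < min (ν / δ ^ 2) (2 / ν))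
    (i : ℕ) (hi : 1 ≤ i)
    (wprev : Ω → EuclideanSpace ℝ (Fin M))
    (hwprev_meas : StronglyMeasurable[ℱ (i - 1)] wprev)
    (hwprev_L2 : MemLp wprev 2 P)
    (H : Ω → Matrix (Fin M) (Fin M) ℝ)
    (hH_meas : StronglyMeasurable[ℱ (i - 1)] H)
    (hH_symm : ∀ᵐ ω ∂P, (H ω).IsSymm)
    (hH_bounds : ∀ᵐ ω ∂P, ∀ x : EuclideanSpace ℝ (Fin M),
      ν * ‖x‖ ^ 2 ≤ (inner ℝ x (Matrix.toEuclideanLin (H ω) x) : ℝ) ∧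
      (inner ℝ x (Matrix.toEuclideanLin (H ω) x) : ℝ) ≤ δ * ‖x‖ ^ 2)
    (s : Ω → EuclideanSpace ℝ (Fin M))
    (hs_L2 : MemLp s 2 P)
    (hs_mean : P[s | ℱ (i - 1)] =ᵐ[P] 0)
    (hs_var : ∀ᵐ ω ∂P,
      (P[fun ω' => ‖s ω'‖ ^ 2 | ℱ (i - 1)]) ω ≤ β ^ 2 * ‖wprev ω + wo‖ ^ 2 + σ ^ 2)
    (q : Ω → EuclideanSpace ℝ (Fin M))
    (hq : ∀ᵐ ω ∂P, ‖q ω‖ ≤ e)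
    (wnext : Ω → EuclideanSpace ℝ (Fin M))
    (hwnext : ∀ ω, wnext ω =
      Matrix.toEuclideanLin (1 - μ • H ω) (wprev ω) + μ • s ω - (μ * η) • q ω - μ • b) :
    ∫ ω, ‖wnext ω‖ ^ 2 ∂P ≤
      (1 - μ * ν / 2 + 2 * μ ^ 2 * β ^ 2 / (1 - μ * ν / 2)) * ∫ ω, ‖wprev ω‖ ^ 2 ∂P +
      2 * μ ^ 2 * β ^ 2 * ‖wo‖ ^ 2 / (1 - μ * ν / 2) +
      μ ^ 2 * σ ^ 2 / (1 - μ * ν / 2) + 8 * μ * η ^ 2 * e ^ 2 / ν := by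
  -- basic scalar facts
  have hδ0 : 0 < δ := lt_of_lt_of_le hν hνδ
  have hμ1 : μ < ν / δ ^ 2 := hμ.trans_le (min_le_left _ _)
  have hμ2 : μ < 2 / ν := hμ.trans_le (min_le_right _ _)
  have hμδ : μ * δ ^ 2 < ν := (lt_div_iff₀ (by positivity)).mp hμ1
  have hμν1 : μ * ν < 1 := by nlinarith
  have hμν2 : μ * ν < 2 := by
    have := (lt_div_iff₀ hν).mp hμ2; linarith
  set t : ℝ := μ * ν / 2 with ht_def
  have ht : 0 < t := by positivity
  have ht1 : t < 1 := by simp only [ht_def]; linarith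
  have h1t : 0 < 1 - t := by linarith
  have hm : (ℱ (i - 1) : MeasurableSpace Ω) ≤ m0 := ℱ.le (i - 1)
  haveI : SigmaFinite (P.trim hm) := inferInstance
  set W := ∫ ω, ‖wprev ω‖ ^ 2 ∂P with hW_def
  have hW0 : 0 ≤ W := integral_nonneg fun ω => by positivity
  -- decomposition
  set g : Ω → EuclideanSpace ℝ (Fin M) :=
    fun ω => wprev ω - μ • Matrix.toEuclideanLin (H ω) (wprev ω) with hg_def
  set u : Ω → EuclideanSpace ℝ (Fin M) := fun ω => g ω + μ • s ω with hu_def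
  set d : Ω → EuclideanSpace ℝ (Fin M) := fun ω => (μ * η) • q ω + μ • b with hd_def
  have hone : ∀ x : EuclideanSpace ℝ (Fin M), Matrix.toEuclideanLin (1 : Matrix (Fin M) (Fin M) ℝ) x = x := by
    intro x
    simp [Matrix.toEuclideanLin_apply, Matrix.one_mulVec]
  have hud : ∀ ω, wnext ω = u ω - d ω := by
    intro ω
    rw [hwnext ω]
    have : Matrix.toEuclideanLin (1 - μ • H ω) (wprev ω)
        = wprev ω - μ • Matrix.toEuclideanLin (H ω) (wprev ω) := by
      rw [map_sub, _root_.map_smul]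
      simp [hone]
    rw [this]
    simp only [hu_def, hg_def, hd_def]
    abel
  -- measurability of g
  have hTcont : Continuous (fun p : Matrix (Fin M) (Fin M) ℝ × EuclideanSpace ℝ (Fin M) =>
      Matrix.toEuclideanLin p.1 p.2) := by
    have h1 : Continuous (fun p : Matrix (Fin M) (Fin M) ℝ × EuclideanSpace ℝ (Fin M) =>
        Matrix.mulVec p.1 ((WithLp.equiv 2 (Fin M → ℝ)) p.2)) :=
      continuous_fst.matrix_mulVec ((PiLp.continuous_ofLp 2 _).comp continuous_snd)
    exact (PiLp.continuous_toLp 2 _).comp h1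
  have hg_meas : StronglyMeasurable[ℱ (i - 1)] g :=
    hwprev_meas.sub ((hTcont.comp_stronglyMeasurable (hH_meas.prodMk hwprev_meas)).const_smul μ)
  -- a.e. contraction bound for g
  have hg_bound : ∀ᵐ ω ∂P, ‖g ω‖ ^ 2 ≤ (1 - μ * ν) * ‖wprev ω‖ ^ 2 := by
    filter_upwards [hH_symm, hH_bounds] with ω hsymm hbnd
    set T := Matrix.toEuclideanLin (H ω) with hT_def
    have herm : (H ω).IsHermitian := by
      rw [Matrix.IsHermitian, Matrix.conjTranspose_eq_transpose_of_trivial]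
      exact hsymm
    have hTsym : ∀ a c : EuclideanSpace ℝ (Fin M), (inner ℝ (T a) c : ℝ) = inner ℝ a (T c) :=
      Matrix.isHermitian_iff_isSymmetric.mp herm
    have hlo : ∀ z, 0 ≤ (inner ℝ z (T z) : ℝ) := fun z =>
      le_trans (by positivity) (hbnd z).1
    have hhi : ∀ z, (inner ℝ z (T z) : ℝ) ≤ δ * ‖z‖ ^ 2 := fun z => (hbnd z).2
    have hkey := symm_op_sq_norm hδ0 T hTsym hlo hhi (wprev ω)
    set x := wprev ω
    have hx : ‖x - μ • T x‖ ^ 2 = ‖x‖ ^ 2 - 2 * μ * (inner ℝ x (T x) : ℝ) + μ ^ 2 * ‖T x‖ ^ 2 := by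
      rw [norm_sub_sq_real, real_inner_smul_right, norm_smul, Real.norm_eq_abs, abs_of_pos hμ0]
      ring
    have hlow := (hbnd x).1
    show ‖x - μ • T x‖ ^ 2 ≤ (1 - μ * ν) * ‖x‖ ^ 2
    rw [hx]
    nlinarith [mul_le_mul_of_nonneg_left hlow (by positivity : (0:ℝ) ≤ 2 * μ),
      mul_le_mul_of_nonneg_left hkey (sq_nonneg μ),
      mul_le_mul_of_nonneg_right hμδ.le (sq_nonneg ‖x‖), sq_nonneg ‖x‖, hμ0.le]
  -- L² facts
  have hg_meas0 : AEStronglyMeasurable g P := (hg_meas.mono hm).aestronglyMeasurable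
  have hg_norm_le : ∀ᵐ ω ∂P, ‖g ω‖ ≤ ‖wprev ω‖ := by
    filter_upwards [hg_bound] with ω hω
    nlinarith [norm_nonneg (g ω), norm_nonneg (wprev ω),
      mul_nonneg (mul_pos hμ0 hν).le (sq_nonneg ‖wprev ω‖)]
  have hg_L2 : MemLp g 2 P := hwprev_L2.of_le hg_meas0 hg_norm_le
  have hu_L2 : MemLp u 2 P := hg_L2.add (hs_L2.const_smul μ)
  have hg_sq_int : Integrable (fun ω => ‖g ω‖ ^ 2) P := hg_L2.norm.integrable_sq
  have hs_sq_int : Integrable (fun ω => ‖s ω‖ ^ 2) P := hs_L2.norm.integrable_sq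
  have hu_sq_int : Integrable (fun ω => ‖u ω‖ ^ 2) P := hu_L2.norm.integrable_sq
  have hw_sq_int : Integrable (fun ω => ‖wprev ω‖ ^ 2) P := hwprev_L2.norm.integrable_sq
  have hwo_sq_int : Integrable (fun ω => ‖wprev ω + wo‖ ^ 2) P :=
    (hwprev_L2.add (memLp_const wo)).norm.integrable_sq
  have hs_int : Integrable s P := hs_L2.integrable one_le_two
  -- conditional expectation of coordinates of s vanishes
  have hski : ∀ k : Fin M, Integrable (fun ω => s ω k) P := by
    intro k
    have h := (EuclideanSpace.proj (𝕜 := ℝ) k).integrable_comp hs_int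
    exact h
  have hsk_aesm : ∀ k : Fin M, AEStronglyMeasurable (fun ω => s ω k) P := by
    intro k
    have h := (EuclideanSpace.proj (𝕜 := ℝ) k).continuous.comp_aestronglyMeasurable
      hs_L2.aestronglyMeasurable
    exact h
  have hsk0 : ∀ k : Fin M, P[(fun ω => s ω k) | ℱ (i - 1)] =ᵐ[P] 0 := by
    intro k
    refine (ae_eq_condExp_of_forall_setIntegral_eq hm (hski k)
      (fun A _ _ => integrableOn_zero) (fun A hA _ => ?_)
      ((@stronglyMeasurable_zero Ω ℝ (ℱ (i - 1)) _).aestronglyMeasurable)).symm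
    have h2 : ∫ ω in A, s ω ∂P = 0 := by
      rw [← setIntegral_condExp hm hs_int hA]
      rw [setIntegral_congr_ae (hm _ hA) (hs_mean.mono fun ω h _ => h)]
      simp
    have h0 := (EuclideanSpace.proj (𝕜 := ℝ) k).integral_comp_comm
      (Integrable.integrableOn (s := A) hs_int)
    simp only [EuclideanSpace.proj, PiLp.proj_apply, h2] at h0
    rw [h0]
    simp
  -- cross term vanishes
  have hgk_meas : ∀ k : Fin M, StronglyMeasurable[ℱ (i - 1)] (fun ω => g ω k) := fun k =>
    (EuclideanSpace.proj k).continuous.comp_stronglyMeasurable hg_meas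
  have hcoord_le : ∀ (x : EuclideanSpace ℝ (Fin M)) (k : Fin M), |x k| ≤ ‖x‖ := by
    intro x k
    have h1 : |x k| ^ 2 ≤ ∑ j, |x j| ^ 2 :=
      Finset.single_le_sum (f := fun j => |x j| ^ 2) (fun j _ => sq_nonneg _)
        (Finset.mem_univ k)
    have h2 : ‖x‖ = Real.sqrt (∑ j, |x j| ^ 2) := by
      rw [EuclideanSpace.norm_eq]
      simp [Real.norm_eq_abs]
    rw [h2, ← Real.sqrt_sq (abs_nonneg (x k))]
    exact Real.sqrt_le_sqrt h1
  have hprod_int : ∀ k : Fin M, Integrable ((fun ω => g ω k) * fun ω => s ω k) P := by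
    intro k
    refine Integrable.mono' ((hg_sq_int.add hs_sq_int).div_const 2)
      ((((hgk_meas k).mono hm).aestronglyMeasurable).mul (hsk_aesm k))
      (Filter.Eventually.of_forall fun ω => ?_)
    simp only [Pi.mul_apply, Pi.add_apply, Real.norm_eq_abs, abs_mul]
    have h1 : |g ω k| * |s ω k| ≤ ‖g ω‖ * ‖s ω‖ :=
      mul_le_mul (hcoord_le _ k) (hcoord_le _ k) (abs_nonneg _) (norm_nonneg _)
    nlinarith [sq_nonneg (‖g ω‖ - ‖s ω‖)]
  have hinner_eq : ∀ (x y : EuclideanSpace ℝ (Fin M)), (inner ℝ x y : ℝ) = ∑ k, x k * y k := by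
    intro x y
    simp [PiLp.inner_apply, RCLike.inner_apply, conj_trivial]
    exact Finset.sum_congr rfl fun _ _ => mul_comm _ _
  have hzero : ∀ k : Fin M, ∫ ω, ((fun ω' => g ω' k) * fun ω' => s ω' k) ω ∂P = 0 := by
    intro k
    have hpull : P[(fun ω' => g ω' k) * fun ω' => s ω' k | ℱ (i - 1)]
        =ᵐ[P] (fun ω' => g ω' k) * P[(fun ω' => s ω' k) | ℱ (i - 1)] :=
      condExp_mul_of_stronglyMeasurable_left (hgk_meas k) (hprod_int k) (hski k)
    have hz : P[(fun ω' => g ω' k) * fun ω' => s ω' k | ℱ (i - 1)] =ᵐ[P] 0 := by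
      filter_upwards [hpull, hsk0 k] with ω h1 h2
      simp only [h1, Pi.mul_apply, h2, Pi.zero_apply, mul_zero]
    rw [← integral_condExp hm (f := (fun ω' => g ω' k) * fun ω' => s ω' k),
      integral_congr_ae hz]
    simp
  have hcross : ∫ ω, (inner ℝ (g ω) (s ω) : ℝ) ∂P = 0 := by
    have heq : (fun ω => (inner ℝ (g ω) (s ω) : ℝ))
        = fun ω => ∑ k, ((fun ω' => g ω' k) * fun ω' => s ω' k) ω :=
      funext fun ω => hinner_eq (g ω) (s ω)
    rw [heq, integral_finset_sum _ fun k _ => hprod_int k]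
    exact Finset.sum_eq_zero fun k _ => hzero k
  have hcross_int : Integrable (fun ω => (inner ℝ (g ω) (s ω) : ℝ)) P := by
    have heq : (fun ω => (inner ℝ (g ω) (s ω) : ℝ))
        = fun ω => ∑ k, ((fun ω' => g ω' k) * fun ω' => s ω' k) ω :=
      funext fun ω => hinner_eq (g ω) (s ω)
    rw [heq]
    exact integrable_finset_sum _ fun k _ => hprod_int k
  -- second moment of u
  have hIu : ∫ ω, ‖u ω‖ ^ 2 ∂P = ∫ ω, ‖g ω‖ ^ 2 ∂P + μ ^ 2 * ∫ ω, ‖s ω‖ ^ 2 ∂P := by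
    have hpt : ∀ ω, ‖u ω‖ ^ 2
        = ‖g ω‖ ^ 2 + 2 * μ * (inner ℝ (g ω) (s ω) : ℝ) + μ ^ 2 * ‖s ω‖ ^ 2 := by
      intro ω
      show ‖g ω + μ • s ω‖ ^ 2 = _
      rw [norm_add_sq_real, real_inner_smul_right, norm_smul, Real.norm_eq_abs,
        abs_of_pos hμ0]
      ring
    calc ∫ ω, ‖u ω‖ ^ 2 ∂P
        = ∫ ω, (‖g ω‖ ^ 2 + 2 * μ * (inner ℝ (g ω) (s ω) : ℝ) + μ ^ 2 * ‖s ω‖ ^ 2) ∂P :=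
          integral_congr_ae (Filter.Eventually.of_forall hpt)
      _ = ∫ ω, (‖g ω‖ ^ 2 + 2 * μ * (inner ℝ (g ω) (s ω) : ℝ)) ∂P
          + ∫ ω, μ ^ 2 * ‖s ω‖ ^ 2 ∂P :=
          integral_add (hg_sq_int.add (hcross_int.const_mul _)) (hs_sq_int.const_mul _)
      _ = ∫ ω, ‖g ω‖ ^ 2 ∂P + ∫ ω, 2 * μ * (inner ℝ (g ω) (s ω) : ℝ) ∂P
          + ∫ ω, μ ^ 2 * ‖s ω‖ ^ 2 ∂P := by
          rw [integral_add hg_sq_int (hcross_int.const_mul _)]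
      _ = ∫ ω, ‖g ω‖ ^ 2 ∂P + μ ^ 2 * ∫ ω, ‖s ω‖ ^ 2 ∂P := by
          rw [integral_const_mul, integral_const_mul, hcross, mul_zero, add_zero]
  -- bound on E‖g‖²
  have hIg : ∫ ω, ‖g ω‖ ^ 2 ∂P ≤ (1 - μ * ν) * W := by
    calc ∫ ω, ‖g ω‖ ^ 2 ∂P ≤ ∫ ω, (1 - μ * ν) * ‖wprev ω‖ ^ 2 ∂P :=
          integral_mono_ae hg_sq_int (hw_sq_int.const_mul _) hg_bound
      _ = (1 - μ * ν) * W := by rw [integral_const_mul]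
  -- bound on E‖s‖²
  have hIs : ∫ ω, ‖s ω‖ ^ 2 ∂P ≤ 2 * β ^ 2 * W + 2 * β ^ 2 * ‖wo‖ ^ 2 + σ ^ 2 := by
    have h1 : ∫ ω, ‖s ω‖ ^ 2 ∂P
        = ∫ ω, (P[fun ω' => ‖s ω'‖ ^ 2 | ℱ (i - 1)]) ω ∂P := (integral_condExp hm).symm
    have h2 : ∫ ω, (P[fun ω' => ‖s ω'‖ ^ 2 | ℱ (i - 1)]) ω ∂P
        ≤ ∫ ω, (β ^ 2 * ‖wprev ω + wo‖ ^ 2 + σ ^ 2) ∂P :=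
      integral_mono_ae integrable_condExp
        ((hwo_sq_int.const_mul _).add (integrable_const _)) hs_var
    have h3 : ∫ ω, (β ^ 2 * ‖wprev ω + wo‖ ^ 2 + σ ^ 2) ∂P
        = β ^ 2 * ∫ ω, ‖wprev ω + wo‖ ^ 2 ∂P + σ ^ 2 := by
      rw [integral_add (hwo_sq_int.const_mul _) (integrable_const _), integral_const_mul,
        integral_const]
      simp
    have h4 : ∫ ω, ‖wprev ω + wo‖ ^ 2 ∂P ≤ 2 * W + 2 * ‖wo‖ ^ 2 := by
      have hpt : ∀ ω, ‖wprev ω + wo‖ ^ 2 ≤ 2 * ‖wprev ω‖ ^ 2 + 2 * ‖wo‖ ^ 2 := by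
        intro ω
        nlinarith [norm_add_le (wprev ω) wo, norm_nonneg (wprev ω + wo),
          norm_nonneg (wprev ω), norm_nonneg wo, sq_nonneg (‖wprev ω‖ - ‖wo‖)]
      calc ∫ ω, ‖wprev ω + wo‖ ^ 2 ∂P
          ≤ ∫ ω, (2 * ‖wprev ω‖ ^ 2 + 2 * ‖wo‖ ^ 2) ∂P :=
            integral_mono_ae hwo_sq_int ((hw_sq_int.const_mul _).add (integrable_const _))
              (Filter.Eventually.of_forall hpt)
        _ = 2 * W + 2 * ‖wo‖ ^ 2 := by
            rw [integral_add (hw_sq_int.const_mul _) (integrable_const _), integral_const_mul,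
              integral_const]
            simp
            exact hW_def.symm
    have h5 := mul_le_mul_of_nonneg_left h4 (sq_nonneg β)
    nlinarith
  -- main pointwise bound and step 1
  have step1 : ∫ ω, ‖wnext ω‖ ^ 2 ∂P ≤ (1 - t)⁻¹ * ∫ ω, ‖u ω‖ ^ 2 ∂P
      + 8 * μ * η ^ 2 * e ^ 2 / ν := by
    have hd_bound : ∀ᵐ ω ∂P, ‖d ω‖ ≤ 2 * μ * η * e := by
      filter_upwards [hq] with ω h
      calc ‖d ω‖ ≤ ‖(μ * η) • q ω‖ + ‖μ • b‖ := norm_add_le _ _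
        _ = μ * η * ‖q ω‖ + μ * ‖b‖ := by
            rw [norm_smul, norm_smul, Real.norm_eq_abs, Real.norm_eq_abs,
              abs_of_nonneg (mul_nonneg hμ0.le hη), abs_of_pos hμ0]
        _ ≤ μ * η * e + μ * (η * e) :=
            add_le_add (mul_le_mul_of_nonneg_left h (mul_nonneg hμ0.le hη))
              (mul_le_mul_of_nonneg_left hb hμ0.le)
        _ = 2 * μ * η * e := by ring
    have hpt : ∀ᵐ ω ∂P, ‖wnext ω‖ ^ 2 ≤ (1 - t)⁻¹ * ‖u ω‖ ^ 2 + 8 * μ * η ^ 2 * e ^ 2 / ν := by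
      filter_upwards [hd_bound] with ω hdω
      have h1 : ‖wnext ω‖ ≤ ‖u ω‖ + ‖d ω‖ := by
        rw [hud ω]; exact norm_sub_le _ _
      have h2 : ‖wnext ω‖ ^ 2 ≤ (‖u ω‖ + ‖d ω‖) ^ 2 := by
        nlinarith [norm_nonneg (wnext ω), norm_nonneg (u ω), norm_nonneg (d ω)]
      have h3 := sq_add_le_div ‖u ω‖ ‖d ω‖ t ht ht1
      have h4 : t⁻¹ * ‖d ω‖ ^ 2 ≤ t⁻¹ * (2 * μ * η * e) ^ 2 := by
        apply mul_le_mul_of_nonneg_left _ (inv_nonneg.mpr ht.le)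
        nlinarith [norm_nonneg (d ω)]
      have h5 : t⁻¹ * (2 * μ * η * e) ^ 2 = 8 * μ * η ^ 2 * e ^ 2 / ν := by
        rw [ht_def]
        field_simp
        ring
      linarith
    by_cases hint : Integrable (fun ω => ‖wnext ω‖ ^ 2) P
    · have hle := integral_mono_ae
        (g := fun ω => (1 - t)⁻¹ * ‖u ω‖ ^ 2 + 8 * μ * η ^ 2 * e ^ 2 / ν) hint
        ((hu_sq_int.const_mul _).add (integrable_const _)) hpt
      have heq : ∫ ω, ((1 - t)⁻¹ * ‖u ω‖ ^ 2 + 8 * μ * η ^ 2 * e ^ 2 / ν) ∂P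
          = (1 - t)⁻¹ * ∫ ω, ‖u ω‖ ^ 2 ∂P + 8 * μ * η ^ 2 * e ^ 2 / ν := by
        rw [integral_add (hu_sq_int.const_mul _) (integrable_const _), integral_const_mul,
          integral_const]
        simp
      linarith [hle, heq.le, heq.ge]
    · rw [integral_undef hint]
      have hn1 : 0 ≤ (1 - t)⁻¹ * ∫ ω, ‖u ω‖ ^ 2 ∂P :=
        mul_nonneg (inv_nonneg.mpr h1t.le) (integral_nonneg fun ω => by positivity)
      have hn2 : (0:ℝ) ≤ 8 * μ * η ^ 2 * e ^ 2 / ν := by positivity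
      linarith
  -- step 2: scalar estimate
  have step2 : (1 - t)⁻¹ * ∫ ω, ‖u ω‖ ^ 2 ∂P ≤
      (1 - t + 2 * μ ^ 2 * β ^ 2 / (1 - t)) * W +
      2 * μ ^ 2 * β ^ 2 * ‖wo‖ ^ 2 / (1 - t) +
      μ ^ 2 * σ ^ 2 / (1 - t) := by
    have hIu_le : ∫ ω, ‖u ω‖ ^ 2 ∂P
        ≤ ((1 - t) ^ 2 + 2 * μ ^ 2 * β ^ 2) * W + 2 * μ ^ 2 * β ^ 2 * ‖wo‖ ^ 2
          + μ ^ 2 * σ ^ 2 := by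
      have hmuIs := mul_le_mul_of_nonneg_left hIs (sq_nonneg μ)
      have h1 : (1 - μ * ν) * W ≤ (1 - t) ^ 2 * W := by
        apply mul_le_mul_of_nonneg_right _ hW0
        rw [ht_def]
        nlinarith [sq_nonneg (μ * ν)]
      linarith [hIu, hIg, hmuIs, h1]
    rw [inv_mul_le_iff₀ h1t]
    have hexp : (1 - t) * ((1 - t + 2 * μ ^ 2 * β ^ 2 / (1 - t)) * W +
        2 * μ ^ 2 * β ^ 2 * ‖wo‖ ^ 2 / (1 - t) + μ ^ 2 * σ ^ 2 / (1 - t))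
        = ((1 - t) ^ 2 + 2 * μ ^ 2 * β ^ 2) * W + 2 * μ ^ 2 * β ^ 2 * ‖wo‖ ^ 2
          + μ ^ 2 * σ ^ 2 := by
      have hne : (1:ℝ) - t ≠ 0 := ne_of_gt h1t
      field_simp
      try left; trivial
    rw [hexp]
    exact hIu_le
  calc ∫ ω, ‖wnext ω‖ ^ 2 ∂P ≤ (1 - t)⁻¹ * ∫ ω, ‖u ω‖ ^ 2 ∂P
      + 8 * μ * η ^ 2 * e ^ 2 / ν := step1
    _ ≤ _ := by linarith
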